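/- arXiv:2211.09864 — 3 statements merged into one kernel-verified Lean document; each statement's English description precedes it below -/
import Mathlib

section
/- Let V be a finite type with |V| = n and let m_R, m_S : V → ℕ be multiplicity functions. Let f̂_R, f̂_S : Fin n → ℝ be nonnegative non-increasing sequences such that for every i, the sum of the i largest values of m_R is at most Σ_{j ≤ i} f̂_R(j), and the sum of the i largest values of m_S is at most Σ_{j ≤ i} f̂_S(j). Then Σ_{v ∈ V} m_R(v)·m_S(v) ≤ Σ_{i} f̂_R(i)·f̂_S(i). -/
open Finset

/-- The sum of the `i` largest values of `m`, i.e. the maximum over all sets of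
at most `i` elements of the total value of `m` on that set. -/
def sumTop {V : Type*} [Fintype V] (m : V → ℕ) (i : ℕ) : ℕ :=
  ((Finset.univ : Finset V).powerset.filter (fun T => T.card ≤ i)).sup
    (fun T => ∑ v ∈ T, m v)

/-- Abel-summation style comparison lemma. -/
lemma abel_le : ∀ (n : ℕ) (a b : ℕ → ℝ) (g : ℕ → ℝ),
    (∀ i, i < n → 0 ≤ g i) →
    (∀ i j, i ≤ j → j < n → g j ≤ g i) →
    (∀ i, i < n → ∑ j ∈ range (i+1), a j ≤ ∑ j ∈ range (i+1), b j) →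
    ∑ j ∈ range n, a j * g j ≤ ∑ j ∈ range n, b j * g j := by
  intro n
  induction n with
  | zero => intro a b g _ _ _; simp
  | succ n ih =>
    intro a b g hg0 hganti hdom
    have key : ∀ c : ℕ → ℝ, ∑ j ∈ range (n+1), c j * g j
        = ∑ j ∈ range n, c j * (g j - g n) + (∑ j ∈ range (n+1), c j) * g n := by
      intro c
      rw [sum_range_succ, sum_range_succ (f := c), add_mul, sum_mul,
        ← add_assoc, ← sum_add_distrib]
      congr 1
      exact Finset.sum_congr rfl (fun j _ => by ring)
    rw [key a, key b]
    have h1 : ∑ j ∈ range n, a j * (g j - g n) ≤ ∑ j ∈ range n, b j * (g j - g n) := by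
      apply ih
      · intro i hi
        have := hganti i n (le_of_lt hi) (Nat.lt_succ_self n)
        linarith
      · intro i j hij hj
        have := hganti i j hij (hj.trans (Nat.lt_succ_self n))
        linarith
      · intro i hi; exact hdom i (hi.trans (Nat.lt_succ_self n))
    have h2 : (∑ j ∈ range (n+1), a j) * g n ≤ (∑ j ∈ range (n+1), b j) * g n :=
      mul_le_mul_of_nonneg_right (hdom n (Nat.lt_succ_self n)) (hg0 n (Nat.lt_succ_self n))
    linarith

/-- Extend a `Fin n`-indexed sequence to `ℕ` by zero. -/
noncomputable def pad {n : ℕ} (f : Fin n → ℝ) : ℕ → ℝ :=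
  fun k => if h : k < n then f ⟨k, h⟩ else 0

lemma pad_sum_univ {n : ℕ} (f : Fin n → ℝ) :
    ∑ i : Fin n, f i = ∑ k ∈ range n, pad f k := by
  rw [← Fin.sum_univ_eq_sum_range (pad f) n]
  exact Finset.sum_congr rfl (fun i _ => by simp [pad, i.isLt])

lemma map_Iic_fin {n : ℕ} (i : Fin n) :
    (Finset.Iic i).map Fin.valEmbedding = Finset.range (i.val+1) := by
  ext k
  simp only [Finset.mem_map, Finset.mem_Iic, Fin.valEmbedding_apply, Finset.mem_range,
    Nat.lt_succ_iff]
  constructor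
  · rintro ⟨j, hj, rfl⟩; exact hj
  · intro hk; exact ⟨⟨k, lt_of_le_of_lt hk i.isLt⟩, hk, rfl⟩

lemma pad_sum_Iic {n : ℕ} (f : Fin n → ℝ) (i : Fin n) :
    ∑ j ∈ Finset.Iic i, f j = ∑ k ∈ range (i.val+1), pad f k := by
  rw [← map_Iic_fin, Finset.sum_map]
  exact Finset.sum_congr rfl (fun j _ => by simp [pad, j.isLt])

/-- Two-relation instance of Theorem 2: valid compressions of the cumulative
degree sequences (non-increasing, nonnegative sequences whose partial sums
dominate the sums of top multiplicities) still upper bound the join size. -/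
theorem stmt_6 (V : Type*) [Fintype V]
    (mR mS : V → ℕ) (fhatR fhatS : Fin (Fintype.card V) → ℝ)
    (hRpos : ∀ i, 0 ≤ fhatR i) (hSpos : ∀ i, 0 ≤ fhatS i)
    (hRanti : Antitone fhatR) (hSanti : Antitone fhatS)
    (hRdom : ∀ i : Fin (Fintype.card V),
      (sumTop mR ((i : ℕ) + 1) : ℝ) ≤ ∑ j ∈ Finset.Iic i, fhatR j)
    (hSdom : ∀ i : Fin (Fintype.card V),
      (sumTop mS ((i : ℕ) + 1) : ℝ) ≤ ∑ j ∈ Finset.Iic i, fhatS j) :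
    ((∑ v, mR v * mS v : ℕ) : ℝ) ≤ ∑ i, fhatR i * fhatS i := by
  classical
  set e0 : Fin (Fintype.card V) ≃ V := (Fintype.equivFin V).symm with he0
  set eR : Fin (Fintype.card V) ≃ V :=
    Fin.revPerm.trans ((Tuple.sort (fun i => mR (e0 i))).trans e0) with heR
  set eS : Fin (Fintype.card V) ≃ V :=
    Fin.revPerm.trans ((Tuple.sort (fun i => mS (e0 i))).trans e0) with heS
  set rR : Fin (Fintype.card V) → ℝ := fun i => (mR (eR i) : ℝ) with hrR
  set rS : Fin (Fintype.card V) → ℝ := fun i => (mS (eS i) : ℝ) with hrS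
  have hrRanti : Antitone rR := by
    intro i j hij
    have hmono := Tuple.monotone_sort (fun i => mR (e0 i))
    have h := hmono (Fin.rev_le_rev.mpr hij)
    simpa [hrR, heR, Function.comp, Equiv.trans_apply] using (Nat.cast_le (α := ℝ)).mpr h
  have hrSanti : Antitone rS := by
    intro i j hij
    have hmono := Tuple.monotone_sort (fun i => mS (e0 i))
    have h := hmono (Fin.rev_le_rev.mpr hij)
    simpa [hrS, heS, Function.comp, Equiv.trans_apply] using (Nat.cast_le (α := ℝ)).mpr h
  have topdom : ∀ (m : V → ℕ) (e : Fin (Fintype.card V) ≃ V) (i : Fin (Fintype.card V)),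
      ∑ j ∈ Finset.Iic i, (m (e j) : ℝ) ≤ (sumTop m ((i : ℕ) + 1) : ℝ) := by
    intro m e i
    have hsum : ∑ v ∈ (Finset.Iic i).image e, m v = ∑ j ∈ Finset.Iic i, m (e j) :=
      Finset.sum_image (fun a _ b _ h => e.injective h)
    have hcard : ((Finset.Iic i).image e).card ≤ (i : ℕ) + 1 := by
      refine (Finset.card_image_le).trans ?_
      rw [Fin.card_Iic]
    have hmem : (Finset.Iic i).image e ∈
        ((Finset.univ : Finset V).powerset.filter (fun T => T.card ≤ (i : ℕ) + 1)) := by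
      simp [Finset.mem_filter, Finset.mem_powerset, Finset.subset_univ, hcard]
    have hle : ∑ j ∈ Finset.Iic i, m (e j) ≤ sumTop m ((i : ℕ) + 1) := by
      rw [← hsum]
      exact Finset.le_sup (f := fun T => ∑ v ∈ T, m v) hmem
    exact_mod_cast hle
  have hA : ((∑ v, mR v * mS v : ℕ) : ℝ) ≤ ∑ i, rR i * rS i := by
    have h1 : ((∑ v, mR v * mS v : ℕ) : ℝ) = ∑ i, rR i * rS ((eR.trans eS.symm) i) := by
      push_cast
      rw [← Equiv.sum_comp eR (fun v => (mR v : ℝ) * (mS v : ℝ))]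
      exact Finset.sum_congr rfl
        (fun i _ => by simp [hrR, hrS, Equiv.trans_apply, Equiv.apply_symm_apply])
    rw [h1]
    exact (hrRanti.monovary hrSanti).sum_mul_comp_perm_le_sum_mul (σ := eR.trans eS.symm)
  refine hA.trans ?_
  have hdomR : ∀ i, i < Fintype.card V →
      ∑ j ∈ range (i+1), pad rR j ≤ ∑ j ∈ range (i+1), pad fhatR j := by
    intro i hi
    rw [← pad_sum_Iic rR ⟨i, hi⟩, ← pad_sum_Iic fhatR ⟨i, hi⟩]
    exact (topdom mR eR ⟨i, hi⟩).trans (hRdom ⟨i, hi⟩)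
  have hdomS : ∀ i, i < Fintype.card V →
      ∑ j ∈ range (i+1), pad rS j ≤ ∑ j ∈ range (i+1), pad fhatS j := by
    intro i hi
    rw [← pad_sum_Iic rS ⟨i, hi⟩, ← pad_sum_Iic fhatS ⟨i, hi⟩]
    exact (topdom mS eS ⟨i, hi⟩).trans (hSdom ⟨i, hi⟩)
  have step1 : ∑ j ∈ range (Fintype.card V), pad rR j * pad rS j
      ≤ ∑ j ∈ range (Fintype.card V), pad fhatR j * pad rS j := by
    apply abel_le
    · intro i hi; simp only [pad, dif_pos hi, hrS]; positivity
    · intro i j hij hj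
      have hi : i < Fintype.card V := lt_of_le_of_lt hij hj
      simp only [pad, dif_pos hj, dif_pos hi]
      exact hrSanti (show (⟨i, hi⟩ : Fin (Fintype.card V)) ≤ ⟨j, hj⟩ from hij)
    · exact hdomR
  have step2 : ∑ j ∈ range (Fintype.card V), pad rS j * pad fhatR j
      ≤ ∑ j ∈ range (Fintype.card V), pad fhatS j * pad fhatR j := by
    apply abel_le
    · intro i hi; simp only [pad, dif_pos hi]; exact hRpos _
    · intro i j hij hj
      have hi : i < Fintype.card V := lt_of_le_of_lt hij hj
      simp only [pad, dif_pos hj, dif_pos hi]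
      exact hRanti (show (⟨i, hi⟩ : Fin (Fintype.card V)) ≤ ⟨j, hj⟩ from hij)
    · exact hdomS
  calc ∑ i, rR i * rS i = ∑ j ∈ range (Fintype.card V), pad rR j * pad rS j := by
        rw [pad_sum_univ (fun i => rR i * rS i)]
        exact Finset.sum_congr rfl (fun k hk => by
          simp [pad, Finset.mem_range.mp hk])
    _ ≤ ∑ j ∈ range (Fintype.card V), pad fhatR j * pad rS j := step1
    _ = ∑ j ∈ range (Fintype.card V), pad rS j * pad fhatR j :=
        Finset.sum_congr rfl (fun k _ => mul_comm _ _)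
    _ ≤ ∑ j ∈ range (Fintype.card V), pad fhatS j * pad fhatR j := step2
    _ = ∑ i, fhatR i * fhatS i := by
        rw [pad_sum_univ (fun i => fhatR i * fhatS i)]
        exact Finset.sum_congr rfl (fun k hk => by
          simp [pad, Finset.mem_range.mp hk, mul_comm])
end

section
/- Let S be a finite multiset of pairs over a type V₁ × V₂, and let S₁ be its projection to the first coordinate (the multiset image under the first projection). Then for every i ∈ ℕ, F_S(i) ≤ F_{S₁}(i), where F_T(i) denotes the sum of the i largest multiplicities among the distinct elements of the multiset T. -/
/-- The cumulative degree sequence of a finite multiset `S`: `multisetCDS S i`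
is the sum of the `i` largest multiplicities among the distinct elements of
`S`, i.e. the maximum over all sets `T` of at most `i` distinct elements of the
total multiplicity of `T` in `S`. -/
def multisetCDS {V : Type*} [DecidableEq V] (S : Multiset V) (i : ℕ) : ℕ :=
  (S.toFinset.powerset.filter (fun T => T.card ≤ i)).sup
    (fun T => ∑ v ∈ T, S.count v)

/-- Multi-column joins (Section 3.6): the CDS of a single column dominates the
CDS of the compound key formed by a set of columns. -/
theorem stmt_9 {V₁ V₂ : Type*} [DecidableEq V₁] [DecidableEq V₂]
    (S : Multiset (V₁ × V₂)) :
    ∀ i : ℕ, multisetCDS S i ≤ multisetCDS (S.map Prod.fst) i := by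
  intro i
  unfold multisetCDS
  apply Finset.sup_le
  intro T hT
  simp only [Finset.mem_filter, Finset.mem_powerset] at hT
  obtain ⟨hTsub, hTcard⟩ := hT
  have hmem : T.image Prod.fst ∈
      (S.map Prod.fst).toFinset.powerset.filter (fun T => T.card ≤ i) := by
    simp only [Finset.mem_filter, Finset.mem_powerset]
    constructor
    · intro u hu
      simp only [Finset.mem_image] at hu
      obtain ⟨p, hp, rfl⟩ := hu
      have := hTsub hp
      rw [Multiset.mem_toFinset] at this ⊢
      exact Multiset.mem_map_of_mem _ this
    · exact le_trans (Finset.card_image_le) hTcard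
  refine le_trans ?_ (Finset.le_sup hmem)
  have hrw : ∑ v ∈ T, Multiset.count v S =
      ∑ u ∈ T.image Prod.fst, ∑ q ∈ T.filter (fun c => c.1 = u), Multiset.count q S :=
    (Finset.sum_image' (g := Prod.fst)
      (f := fun u => ∑ q ∈ T.filter (fun c => c.1 = u), Multiset.count q S)
      (fun p => Multiset.count p S) (fun p _ => rfl)).symm
  rw [hrw]
  apply Finset.sum_le_sum
  intro u _
  have h1 : ∀ q ∈ T.filter (fun c => c.1 = u), Multiset.count q S =
      Multiset.count q (S.filter (fun c => c.1 = u)) := by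
    intro q hq
    rw [Finset.mem_filter] at hq
    rw [Multiset.count_filter, if_pos hq.2]
  rw [Finset.sum_congr rfl h1]
  have h2 : ∑ q ∈ T.filter (fun c => c.1 = u),
      Multiset.count q (S.filter (fun c => c.1 = u)) ≤
      Multiset.card (S.filter (fun c => c.1 = u)) := by
    set M := S.filter (fun c => c.1 = u) with hM
    calc ∑ q ∈ T.filter (fun c => c.1 = u), Multiset.count q M
        ≤ ∑ q ∈ M.toFinset, Multiset.count q M := by
          rw [← Finset.sum_filter_add_sum_filter_not
            (T.filter (fun c => c.1 = u)) (fun q => q ∈ M.toFinset)]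
          have hz : ∑ q ∈ (T.filter (fun c => c.1 = u)).filter
              (fun q => ¬ q ∈ M.toFinset), Multiset.count q M = 0 := by
            apply Finset.sum_eq_zero
            intro q hq
            rw [Finset.mem_filter] at hq
            rw [Multiset.count_eq_zero]
            intro hqM
            exact hq.2 (Multiset.mem_toFinset.mpr hqM)
          rw [hz, add_zero]
          exact Finset.sum_le_sum_of_subset
            (fun q hq => (Finset.mem_filter.mp hq).2)
      _ = Multiset.card M := Multiset.toFinset_sum_count_eq M
  refine le_trans h2 ?_
  rw [Multiset.count_map]
  refine le_of_eq ?_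
  congr 1
  exact Multiset.filter_congr (fun c _ => by constructor <;> exact fun h => h.symm)
end

section
/- Let f : ℝ → ℝ be k-piecewise linear on an interval (u₀, u_k] (with dividers u₀ < u₁ < ⋯ < u_k and f(x) = a_ℓ·x + b_ℓ on (u_{ℓ-1}, u_ℓ]), and let g : ℝ → ℝ be a monotone non-decreasing l-piecewise linear function on an interval (m₀, m_l] whose range is contained in (u₀, u_k]. Then the composition f ∘ g is piecewise linear on (m₀, m_l] with at most k + l segments. -/
/-- `f` is `k`-piecewise linear on the interval `(s, t]`: there are dividers
`s = u 0 < u 1 < ⋯ < u k = t` and coefficients `a ℓ, b ℓ` with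
`f x = a ℓ * x + b ℓ` on each `(u (ℓ-1), u ℓ]`. -/
def IsPiecewiseLinearOn (f : ℝ → ℝ) (s t : ℝ) (k : ℕ) : Prop :=
  ∃ (u a b : ℕ → ℝ),
    u 0 = s ∧ u k = t ∧ (∀ ℓ < k, u ℓ < u (ℓ + 1)) ∧
    ∀ ℓ, 1 ≤ ℓ → ℓ ≤ k → ∀ x ∈ Set.Ioc (u (ℓ - 1)) (u ℓ), f x = a ℓ * x + b ℓ


open Classical in
noncomputable def idx (u : ℕ → ℝ) (k : ℕ) (y : ℝ) : ℕ :=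
  Nat.find (p := fun i => y ≤ u i ∨ k ≤ i) ⟨k, Or.inr le_rfl⟩

open Classical in
lemma idx_spec (u : ℕ → ℝ) (k : ℕ) (y : ℝ) :
    y ≤ u (idx u k y) ∨ k ≤ idx u k y := by
  unfold idx; exact Nat.find_spec (p := fun i => y ≤ u i ∨ k ≤ i) _

open Classical in
lemma idx_find_le {u : ℕ → ℝ} {k : ℕ} {y : ℝ} {i : ℕ} (h : y ≤ u i ∨ k ≤ i) :
    idx u k y ≤ i := by
  unfold idx; exact Nat.find_le h

open Classical in
lemma idx_not {u : ℕ → ℝ} {k : ℕ} {y : ℝ} {j : ℕ} (h : j < idx u k y) :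
    ¬(y ≤ u j ∨ k ≤ j) := by
  unfold idx at h; exact Nat.find_min _ h

open Classical in
lemma idx_mono {u : ℕ → ℝ} {k : ℕ} {y y' : ℝ} (h : y ≤ y') : idx u k y ≤ idx u k y' := by
  unfold idx; exact Nat.find_mono (fun _ hi => hi.imp (le_trans h) id)

lemma idx_le (u : ℕ → ℝ) (k : ℕ) (y : ℝ) : idx u k y ≤ k :=
  idx_find_le (Or.inr le_rfl)

lemma idx_min {u : ℕ → ℝ} {k : ℕ} {y : ℝ} {j : ℕ} (h : j < idx u k y) :
    u j < y ∧ j < k := by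
  have := idx_not h
  rw [not_or] at this
  exact ⟨lt_of_not_ge this.1, Nat.lt_of_not_le this.2⟩

lemma idx_upper {u : ℕ → ℝ} {k : ℕ} {y : ℝ} (h : y ≤ u k) : y ≤ u (idx u k y) := by
  rcases idx_spec u k y with h1 | h1
  · exact h1
  · have hek : idx u k y = k := le_antisymm (idx_le u k y) h1
    rw [hek]; exact h

lemma idx_pos {u : ℕ → ℝ} {k : ℕ} {y : ℝ} (hk : 1 ≤ k) (h : u 0 < y) : 1 ≤ idx u k y := by
  by_contra hc
  push_neg at hc
  have h0 : idx u k y = 0 := by omega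
  rcases idx_spec u k y with h1 | h1 <;> rw [h0] at h1
  · exact absurd h1 (not_le.mpr h)
  · omega

lemma idx_lower {u : ℕ → ℝ} {k : ℕ} {y : ℝ} (h : 1 ≤ idx u k y) :
    u (idx u k y - 1) < y := (idx_min (u := u) (k := k) (y := y) (j := idx u k y - 1) (by omega)).1

lemma idx_eq {u : ℕ → ℝ} {k : ℕ} {y : ℝ} {i : ℕ}
    (hu : ∀ p q, p < q → q ≤ k → u p < u q)
    (hi1 : 1 ≤ i) (hik : i ≤ k) (hy : y ∈ Set.Ioc (u (i-1)) (u i)) : idx u k y = i := by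
  have hle : idx u k y ≤ i := idx_find_le (Or.inl hy.2)
  rcases lt_or_eq_of_le hle with hlt | he
  · exfalso
    have hm : u (idx u k y) < y ∧ idx u k y < k := by
      rcases idx_spec u k y with h1 | h1
      · have : u (idx u k y) ≤ u (i - 1) := by
          rcases Nat.lt_or_ge (idx u k y) (i-1) with hh | hh
          · exact le_of_lt (hu _ _ hh (by omega))
          · have : idx u k y = i - 1 := by omega
            rw [this]
        constructor
        · linarith [hy.1]
        · omega
      · omega
    linarith [hm.1, (idx_upper (le_trans hy.2 (by
        rcases lt_or_eq_of_le hik with h2 | h2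
        · exact le_of_lt (hu _ _ h2 le_rfl)
        · rw [h2]))), hy.2]
  · exact he


lemma smono {u : ℕ → ℝ} {k : ℕ} (h : ∀ ℓ < k, u ℓ < u (ℓ + 1)) :
    ∀ p q, p < q → q ≤ k → u p < u q := by
  intro p q
  induction q with
  | zero => omega
  | succ n ih =>
    intro hpq hqk
    rcases Nat.lt_or_ge p n with h1 | h1
    · exact lt_trans (ih h1 (by omega)) (h n (by omega))
    · have : p = n := by omega
      rw [this]; exact h n (by omega)

open Set

theorem pwl_of_levels (F : ℝ → ℝ) (s t : ℝ) (hst : s < t) (φ : ℝ → ℕ) (N : ℕ)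
    (hmono : ∀ x ∈ Ioc s t, ∀ y ∈ Ioc s t, x ≤ y → φ x ≤ φ y)
    (hmax : ∀ x ∈ Ioc s t, ∃ β ∈ Ioc s t, φ β = φ x ∧ ∀ y ∈ Ioc s t, φ y = φ x → y ≤ β)
    (haff : ∀ x ∈ Ioc s t, ∃ A B : ℝ, ∀ y ∈ Ioc s t, φ y = φ x → F y = A * y + B)
    (hlb : ∀ x ∈ Ioc s t, 1 ≤ φ x) (hub : ∀ x ∈ Ioc s t, φ x ≤ N) :
    ∃ k' ≤ N, IsPiecewiseLinearOn F s t k' := by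
  classical
  set V : Finset ℕ := (Finset.Icc 1 N).filter (fun v => ∃ x ∈ Ioc s t, φ x = v) with hV
  have hVmem : ∀ x ∈ Ioc s t, φ x ∈ V := by
    intro x hx
    simp only [hV, Finset.mem_filter, Finset.mem_Icc]
    exact ⟨⟨hlb x hx, hub x hx⟩, x, hx, rfl⟩
  -- the maximum point of each level set
  set Bv : ℕ → ℝ := fun v =>
    if h : ∃ β ∈ Ioc s t, φ β = v ∧ ∀ y ∈ Ioc s t, φ y = v → y ≤ β then h.choose else t
    with hBvdef
  have hBv : ∀ v ∈ V, Bv v ∈ Ioc s t ∧ φ (Bv v) = v ∧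
      ∀ y ∈ Ioc s t, φ y = v → y ≤ Bv v := by
    intro v hv
    simp only [hV, Finset.mem_filter] at hv
    obtain ⟨-, x, hx, hfx⟩ := hv
    obtain ⟨β, hβmem, hβeq, hβmax⟩ := hmax x hx
    have hex : ∃ β ∈ Ioc s t, φ β = v ∧ ∀ y ∈ Ioc s t, φ y = v → y ≤ β := by
      refine ⟨β, hβmem, by rw [hβeq, hfx], fun y hy hyv => hβmax y hy (by rw [hyv, hfx])⟩
    have : Bv v = hex.choose := by rw [hBvdef]; simp only [dif_pos hex]
    rw [this]
    obtain ⟨h1, h2, h3⟩ := hex.choose_spec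
    exact ⟨h1, h2, h3⟩
  -- affine coefficients on each level set
  set CAB : ℕ → ℝ × ℝ := fun v =>
    if h : ∃ A B : ℝ, ∀ y ∈ Ioc s t, φ y = v → F y = A * y + B
    then (h.choose, h.choose_spec.choose) else (0, 0) with hCABdef
  have hCAB : ∀ v ∈ V, ∀ y ∈ Ioc s t, φ y = v → F y = (CAB v).1 * y + (CAB v).2 := by
    intro v hv
    simp only [hV, Finset.mem_filter] at hv
    obtain ⟨-, x, hx, hfx⟩ := hv
    obtain ⟨A, B, hAB⟩ := haff x hx
    have hex : ∃ A B : ℝ, ∀ y ∈ Ioc s t, φ y = v → F y = A * y + B :=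
      ⟨A, B, fun y hy hyv => hAB y hy (by rw [hyv, hfx])⟩
    have : CAB v = (hex.choose, hex.choose_spec.choose) := by
      rw [hCABdef]; simp only [dif_pos hex]
    rw [this]
    exact hex.choose_spec.choose_spec
  set L : List ℕ := V.sort (· ≤ ·) with hL
  set K := L.length with hK
  have hKcard : K = V.card := Finset.length_sort _
  have htmem : t ∈ Ioc s t := ⟨hst, le_rfl⟩
  have hKpos : 1 ≤ K := by
    rw [hKcard]
    exact Finset.card_pos.mpr ⟨φ t, hVmem t htmem⟩
  have hgetmem : ∀ r, r < K → L.getD r 0 ∈ V := by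
    intro r hr
    rw [List.getD_eq_get L 0 ⟨r, hr⟩]
    exact (Finset.mem_sort _).mp (L.get_mem ⟨r, hr⟩)
  have hgetlt : ∀ r r', r < r' → r' < K → L.getD r 0 < L.getD r' 0 := by
    intro r r' hrr hr'
    rw [List.getD_eq_get L 0 ⟨r, lt_trans hrr hr'⟩, List.getD_eq_get L 0 ⟨r', hr'⟩]
    exact (Finset.sortedLT_sort V).pairwise.rel_get_of_lt hrr
  have hgetle : ∀ r r', r ≤ r' → r' < K → L.getD r 0 ≤ L.getD r' 0 := by
    intro r r' hrr hr'
    rcases lt_or_eq_of_le hrr with h | h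
    · exact le_of_lt (hgetlt r r' h hr')
    · rw [h]
  -- every value in V appears at some index
  have hmemget : ∀ v ∈ V, ∃ r, r < K ∧ L.getD r 0 = v := by
    intro v hv
    have : v ∈ L := (Finset.mem_sort _).mpr hv
    obtain ⟨n, hn⟩ := List.mem_iff_get.mp this
    exact ⟨n.1, n.2, by rw [List.getD_eq_get L 0 n]; exact hn⟩
  -- last element is φ t
  have hlast : L.getD (K - 1) 0 = φ t := by
    have h1 : L.getD (K - 1) 0 ∈ V := hgetmem _ (by omega)
    obtain ⟨-, x, hx, hfx⟩ := Finset.mem_filter.mp h1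
    have hle1 : L.getD (K - 1) 0 ≤ φ t := by
      rw [← hfx]; exact hmono x hx t htmem hx.2
    obtain ⟨r, hr, hrv⟩ := hmemget (φ t) (hVmem t htmem)
    have : L.getD r 0 ≤ L.getD (K - 1) 0 := hgetle r (K-1) (by omega) (by omega)
    omega
  -- the dividers
  set w : ℕ → ℝ := fun r => if r = 0 then s else Bv (L.getD (r - 1) 0) with hw
  have hw0 : w 0 = s := by simp [hw]
  have hwr : ∀ r, 1 ≤ r → w r = Bv (L.getD (r - 1) 0) := by
    intro r hr; simp only [hw]; rw [if_neg (by omega)]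
  refine ⟨K, by rw [hKcard]; calc V.card ≤ (Finset.Icc 1 N).card := Finset.card_filter_le _ _
    _ = N := by rw [Nat.card_Icc]; omega, w,
    fun r => (CAB (L.getD (r - 1) 0)).1, fun r => (CAB (L.getD (r - 1) 0)).2, hw0, ?_, ?_, ?_⟩
  · -- w K = t
    rw [hwr K hKpos, hlast]
    obtain ⟨hmem, heq, hmaxp⟩ := hBv (φ t) (hVmem t htmem)
    exact le_antisymm hmem.2 (hmaxp t htmem rfl)
  · -- strictly increasing
    intro r hr
    rcases Nat.eq_zero_or_pos r with h0 | h1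
    · rw [h0, hw0, hwr 1 le_rfl]
      exact (hBv _ (hgetmem 0 (by omega))).1.1
    · rw [hwr r h1, hwr (r+1) (by omega)]
      have hm1 := hBv _ (hgetmem (r-1) (by omega))
      have hm2 := hBv _ (hgetmem ((r+1)-1) (by omega))
      by_contra hc
      push_neg at hc
      have := hmono _ hm2.1 _ hm1.1 hc
      rw [hm1.2.1, hm2.2.1] at this
      have := hgetlt (r-1) ((r+1)-1) (by omega) (by omega)
      omega
  · -- affine pieces
    intro r hr1 hrK x hx
    have hwrK : w r = Bv (L.getD (r-1) 0) := hwr r hr1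
    set v := L.getD (r - 1) 0 with hv
    have hvV : v ∈ V := hgetmem _ (by omega)
    obtain ⟨hBmem, hBeq, hBmax⟩ := hBv v hvV
    -- x ∈ Ioc s t
    have hxs : s < x := by
      rcases Nat.lt_or_ge r 2 with h2 | h2
      · have : r - 1 = 0 := by omega
        rw [this, hw0] at hx
        exact hx.1
      · have := hwr (r-1) (by omega)
        rw [this] at hx
        exact lt_trans (hBv _ (hgetmem ((r-1)-1) (by omega))).1.1 hx.1
    have hxt : x ≤ t := by
      have := hx.2
      rw [hwrK] at this
      exact le_trans this hBmem.2
    have hxmem : x ∈ Ioc s t := ⟨hxs, hxt⟩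
    -- φ x = v
    have hφle : φ x ≤ v := by
      have := hmono x hxmem _ hBmem (by rw [hwrK] at hx; exact hx.2)
      rwa [hBeq] at this
    have hφge : v ≤ φ x := by
      rcases Nat.lt_or_ge r 2 with h2 | h2
      · -- r = 1 : v is the minimum of V
        obtain ⟨q, hq, hqv⟩ := hmemget (φ x) (hVmem x hxmem)
        have : L.getD (r-1) 0 ≤ L.getD q 0 := by
          have : r - 1 = 0 := by omega
          rw [this]; exact hgetle 0 q (by omega) hq
        omega
      · -- r ≥ 2 : φ x > L[r-2], and φ x ∈ V with φ x ≤ L[r-1] forces equality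
        set v' := L.getD (r - 2) 0 with hv'
        have hv'V : v' ∈ V := hgetmem _ (by omega)
        obtain ⟨hB'mem, hB'eq, hB'max⟩ := hBv v' hv'V
        have hxgtB' : Bv v' < x := by
          have := hwr (r-1) (by omega)
          rw [show (r-1) - 1 = r - 2 by omega] at this
          rw [this] at hx
          exact hx.1
        have hφgt : v' < φ x := by
          by_contra hc
          push_neg at hc
          have h1 : φ (Bv v') ≤ φ x := hmono _ hB'mem _ hxmem (le_of_lt hxgtB')
          rw [hB'eq] at h1
          have hxv' : φ x = v' := le_antisymm hc h1
          have := hB'max x hxmem hxv'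
          linarith
        -- φ x ∈ V, v' < φ x ≤ v, consecutive sorted values
        obtain ⟨q, hq, hqv⟩ := hmemget (φ x) (hVmem x hxmem)
        rcases Nat.lt_or_ge q (r - 1) with hq2 | hq2
        · exfalso
          have : L.getD q 0 ≤ L.getD (r-2) 0 := hgetle q (r-2) (by omega) (by omega)
          omega
        · have : L.getD (r-1) 0 ≤ L.getD q 0 := hgetle (r-1) q hq2 hq
          omega
    have hφx : φ x = v := le_antisymm hφle hφge
    exact hCAB v hvV x hxmem hφx

/-- Closure under composition (needed by the FDSB algorithm, Section 3.5): the
composition of a `k`-piecewise linear function with a monotone non-decreasing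
`l`-piecewise linear function whose range lies in the domain of the former is
piecewise linear with at most `k + l` segments. -/
theorem stmt_13 (f g : ℝ → ℝ) (k l : ℕ) (hk : 1 ≤ k) (hl : 1 ≤ l)
    (u₀ uk m₀ ml : ℝ)
    (hf : IsPiecewiseLinearOn f u₀ uk k)
    (hg : IsPiecewiseLinearOn g m₀ ml l)
    (hgmono : MonotoneOn g (Set.Ioc m₀ ml))
    (hrange : Set.MapsTo g (Set.Ioc m₀ ml) (Set.Ioc u₀ uk)) :
    ∃ k' ≤ k + l, IsPiecewiseLinearOn (f ∘ g) m₀ ml k' := by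
  classical
  obtain ⟨u, a, b, hu0, huk, huinc, hfa⟩ := hf
  obtain ⟨m, c, d, hm0, hml, hminc, hga⟩ := hg
  have husm := smono huinc
  have hmsm := smono hminc
  have hst : m₀ < ml := by rw [← hm0, ← hml]; exact hmsm 0 l (by omega) le_rfl
  set φ : ℝ → ℕ := fun x => idx m l x + idx u k (g x) with hφ
  -- basic facts about the g-piece index
  have hgp : ∀ x ∈ Ioc m₀ ml,
      1 ≤ idx m l x ∧ idx m l x ≤ l ∧ x ∈ Ioc (m (idx m l x - 1)) (m (idx m l x)) := by
    intro x hx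
    have h1 : 1 ≤ idx m l x := idx_pos hl (by rw [hm0]; exact hx.1)
    exact ⟨h1, idx_le _ _ _, idx_lower h1, idx_upper (by rw [hml]; exact hx.2)⟩
  have hfp : ∀ y ∈ Ioc u₀ uk,
      1 ≤ idx u k y ∧ idx u k y ≤ k ∧ y ∈ Ioc (u (idx u k y - 1)) (u (idx u k y)) := by
    intro y hy
    have h1 : 1 ≤ idx u k y := idx_pos hk (by rw [hu0]; exact hy.1)
    exact ⟨h1, idx_le _ _ _, idx_lower h1, idx_upper (by rw [huk]; exact hy.2)⟩
  -- monotonicity of φ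
  have hmono : ∀ x ∈ Ioc m₀ ml, ∀ y ∈ Ioc m₀ ml, x ≤ y → φ x ≤ φ y := by
    intro x hx y hy hxy
    have h1 : idx m l x ≤ idx m l y := idx_mono hxy
    have h2 : idx u k (g x) ≤ idx u k (g y) := idx_mono (hgmono hx hy hxy)
    simp only [hφ]; omega
  -- equal φ values force equal component indices
  have hpair : ∀ x ∈ Ioc m₀ ml, ∀ y ∈ Ioc m₀ ml, φ y = φ x →
      idx m l y = idx m l x ∧ idx u k (g y) = idx u k (g x) := by
    intro x hx y hy hyx
    simp only [hφ] at hyx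
    rcases le_total x y with hxy | hxy
    · have h1 : idx m l x ≤ idx m l y := idx_mono hxy
      have h2 : idx u k (g x) ≤ idx u k (g y) := idx_mono (hgmono hx hy hxy)
      omega
    · have h1 : idx m l y ≤ idx m l x := idx_mono hxy
      have h2 : idx u k (g y) ≤ idx u k (g x) := idx_mono (hgmono hy hx hxy)
      omega
  -- affine on each level set
  have haff : ∀ x ∈ Ioc m₀ ml, ∃ A B : ℝ,
      ∀ y ∈ Ioc m₀ ml, φ y = φ x → (f ∘ g) y = A * y + B := by
    intro x hx
    set j := idx m l x with hj
    set i := idx u k (g x) with hi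
    refine ⟨a i * c j, a i * d j + b i, ?_⟩
    intro y hy hyx
    obtain ⟨hjy, hiy⟩ := hpair x hx y hy hyx
    obtain ⟨hj1, hjl, hyIoc⟩ := hgp y hy
    rw [hjy] at hyIoc
    have hgy : g y = c j * y + d j := hga j (by omega) (by omega) y hyIoc
    obtain ⟨hi1, hik, hgyIoc⟩ := hfp (g y) (hrange hy)
    rw [hiy] at hgyIoc
    have hfgy : f (g y) = a i * (g y) + b i := by
      have := hfa i (by omega) (by omega) (g y) hgyIoc
      exact this
    simp only [Function.comp_apply]
    rw [hfgy, hgy]; ring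
  -- each level set has a maximum
  have hmax : ∀ x ∈ Ioc m₀ ml, ∃ β ∈ Ioc m₀ ml, φ β = φ x ∧
      ∀ y ∈ Ioc m₀ ml, φ y = φ x → y ≤ β := by
    intro x hx
    obtain ⟨hj1, hjl, hxIoc⟩ := hgp x hx
    set j := idx m l x with hj
    set i := idx u k (g x) with hi
    obtain ⟨hi1, hik, hgxIoc⟩ := hfp (g x) (hrange hx)
    have hmjIoc : m j ∈ Ioc (m (j-1)) (m j) := ⟨hmsm (j-1) j (by omega) hjl, le_rfl⟩
    have hmjmem : m j ∈ Ioc m₀ ml := by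
      constructor
      · rw [← hm0]; exact hmsm 0 j (by omega) hjl
      · rw [← hml]
        rcases Nat.lt_or_ge j l with h1 | h1
        · exact le_of_lt (hmsm j l h1 le_rfl)
        · have : j = l := by omega
          rw [this]
    have hjmj : idx m l (m j) = j := idx_eq hmsm hj1 hjl hmjIoc
    by_cases hc : φ (m j) = φ x
    · refine ⟨m j, hmjmem, hc, ?_⟩
      intro y hy hyx
      have h1 := (hpair x hx y hy hyx).1
      have := (hgp y hy).2.2.2
      rwa [h1] at this
    · -- φ x < φ (m j), so g crosses u i inside the piece
      have hxle : x ≤ m j := hxIoc.2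
      have hφle : φ x ≤ φ (m j) := hmono x hx (m j) hmjmem hxle
      have hφlt : φ x < φ (m j) := lt_of_le_of_ne hφle (Ne.symm hc)
      have hilt : i < idx u k (g (m j)) := by
        simp only [hφ] at hφlt
        rw [hjmj] at hφlt
        omega
      have higk : idx u k (g (m j)) ≤ k := idx_le _ _ _
      have hgmjgt : u i < g (m j) := by
        have h2 := idx_lower (u := u) (k := k) (y := g (m j)) (by omega)
        have h3 : u i ≤ u (idx u k (g (m j)) - 1) := by
          rcases Nat.lt_or_ge i (idx u k (g (m j)) - 1) with h4 | h4
          · exact le_of_lt (husm _ _ h4 (by omega))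
          · have : i = idx u k (g (m j)) - 1 := by omega
            rw [this]
        linarith
      have hgmj : g (m j) = c j * (m j) + d j := hga j (by omega) (by omega) (m j) hmjIoc
      have hgx : g x = c j * x + d j := hga j (by omega) (by omega) x hxIoc
      have hgxle : g x ≤ u i := hgxIoc.2
      have hxlt : x < m j := by
        rcases lt_or_eq_of_le hxle with h5 | h5
        · exact h5
        · exfalso; rw [h5] at hgxle; linarith
      have hcpos : 0 < c j := by
        by_contra h6
        push_neg at h6
        nlinarith
      set β := (u i - d j) / c j with hβ
      have hgβeq : c j * β + d j = u i := by rw [hβ]; field_simp; ring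
      have hxβ : x ≤ β := by
        have h7 : c j * x ≤ c j * β := by linarith
        exact (mul_le_mul_iff_right₀ hcpos).mp h7
      have hβlt : β < m j := by
        have h8 : c j * β < c j * (m j) := by linarith
        exact (mul_lt_mul_iff_right₀ hcpos).mp h8
      have hβIoc : β ∈ Ioc (m (j-1)) (m j) := ⟨lt_of_lt_of_le hxIoc.1 hxβ, le_of_lt hβlt⟩
      have hβmem : β ∈ Ioc m₀ ml := by
        constructor
        · exact lt_of_lt_of_le hx.1 hxβ
        · exact le_trans (le_of_lt hβlt) hmjmem.2
      have hgβ : g β = u i := by rw [hga j (by omega) (by omega) β hβIoc]; exact hgβeq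
      have hjβ : idx m l β = j := idx_eq hmsm hj1 hjl hβIoc
      have hiβ : idx u k (g β) = i := by
        rw [hgβ]
        exact idx_eq husm hi1 hik ⟨husm (i-1) i (by omega) hik, le_rfl⟩
      refine ⟨β, hβmem, by
        show idx m l β + idx u k (g β) = idx m l x + idx u k (g x)
        rw [hjβ, hiβ], ?_⟩
      intro y hy hyx
      obtain ⟨hjy, hiy⟩ := hpair x hx y hy hyx
      obtain ⟨hjy1, hjyl, hyIoc⟩ := hgp y hy
      rw [hjy] at hyIoc
      have hgy : g y = c j * y + d j := hga j (by omega) (by omega) y hyIoc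
      have hgyle : g y ≤ u i := by
        have := (hfp (g y) (hrange hy)).2.2.2
        rwa [hiy] at this
      have h9 : c j * y ≤ c j * β := by linarith
      exact (mul_le_mul_iff_right₀ hcpos).mp h9
  have hlb : ∀ x ∈ Ioc m₀ ml, 1 ≤ φ x := by
    intro x hx
    have := (hgp x hx).1
    simp only [hφ]; omega
  have hub : ∀ x ∈ Ioc m₀ ml, φ x ≤ k + l := by
    intro x hx
    have h1 := idx_le m l x
    have h2 := idx_le u k (g x)
    simp only [hφ]; omega
  exact pwl_of_levels (f ∘ g) m₀ ml hst φ (k + l) hmono hmax haff hlb hub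
end
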